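/- Let c₁ ≥ 0, c₂ > 0, c_vp > 0, λ > 0, and k ≥ 1 be real numbers. Define r_LS = (√(c₁² + 4c₂λ) − c₁)/(2c₂) and r_vp = (√(c₁² + 4c₂kλ) − c₁)/(2c₂·c_vp). Then √k · r_LS / c_vp ≤ r_vp ≤ k · r_LS / c_vp. -/
import Mathlib


/-!
STATEMENT 8: Radii comparison inequality for variable projection.
-/

theorem radii_comparison
    (c₁ c₂ cvp lam k : ℝ)
    (hc₁ : 0 ≤ c₁) (hc₂ : 0 < c₂) (hcvp : 0 < cvp) (hlam : 0 < lam) (hk : 1 ≤ k)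
    (rLS rvp : ℝ)
    (hrLS : rLS = (Real.sqrt (c₁ ^ 2 + 4 * c₂ * lam) - c₁) / (2 * c₂))
    (hrvp : rvp = (Real.sqrt (c₁ ^ 2 + 4 * c₂ * k * lam) - c₁) / (2 * c₂ * cvp)) :
    Real.sqrt k * rLS / cvp ≤ rvp ∧ rvp ≤ k * rLS / cvp := by
  subst hrLS hrvp
  set s := Real.sqrt (c₁ ^ 2 + 4 * c₂ * lam) with hs
  set sk := Real.sqrt (c₁ ^ 2 + 4 * c₂ * k * lam) with hsk
  set q := Real.sqrt k with hq
  have hs0 : 0 ≤ s := Real.sqrt_nonneg _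
  have hsk0 : 0 ≤ sk := Real.sqrt_nonneg _
  have hq0 : 0 ≤ q := Real.sqrt_nonneg _
  have hs2 : s ^ 2 = c₁ ^ 2 + 4 * c₂ * lam := Real.sq_sqrt (by nlinarith)
  have hsk2 : sk ^ 2 = c₁ ^ 2 + 4 * c₂ * k * lam := Real.sq_sqrt (by
    nlinarith [mul_pos (mul_pos hc₂ (lt_of_lt_of_le one_pos hk)) hlam, sq_nonneg c₁])
  have hq2 : q ^ 2 = k := Real.sq_sqrt (by linarith)
  have hq1 : 1 ≤ q := by nlinarith
  have hsc : c₁ ≤ s := by nlinarith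
  -- lower key : q*(s - c₁) ≤ sk - c₁
  have key1 : q * (s - c₁) ≤ sk - c₁ := by
    have hX : q * s - (q - 1) * c₁ ≤ sk := by
      by_cases hXn : q * s - (q - 1) * c₁ ≤ 0
      · linarith
      · push_neg at hXn
        have hsq : (q * s - (q - 1) * c₁) ^ 2 ≤ sk ^ 2 := by
          rw [hsk2]
          nlinarith [mul_nonneg (mul_nonneg (sub_nonneg.2 hq1) hc₁) (sub_nonneg.2 hsc),
            mul_nonneg hq0 (mul_nonneg hc₁ (sub_nonneg.2 hsc))]
        nlinarith
    linarith
  -- upper key : sk - c₁ ≤ k*(s - c₁)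
  have key2 : sk - c₁ ≤ k * (s - c₁) := by
    have hY0 : 0 ≤ k * s - (k - 1) * c₁ := by nlinarith
    have hsq : sk ^ 2 ≤ (k * s - (k - 1) * c₁) ^ 2 := by
      rw [hsk2]
      nlinarith [sq_nonneg (s - c₁), mul_nonneg (mul_nonneg (by linarith : (0:ℝ) ≤ k) (by linarith : (0:ℝ) ≤ k - 1)) (sq_nonneg (s - c₁))]
    have : sk ≤ k * s - (k - 1) * c₁ := by nlinarith
    linarith
  have e1 : q * ((s - c₁) / (2 * c₂)) / cvp = (q * (s - c₁)) / (2 * c₂ * cvp) := by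
    field_simp
  have e2 : k * ((s - c₁) / (2 * c₂)) / cvp = (k * (s - c₁)) / (2 * c₂ * cvp) := by
    field_simp
  constructor
  · rw [e1]; gcongr
  · rw [e2]; gcongr
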